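/- arXiv:2106.01734 — 9 statements merged into one kernel-verified Lean document; each statement's English description precedes it below -/
import Mathlib

section
/- For predicates φ : A → Prop and ψ : B → Prop, the predicate φ ⊓ ψ on A × B is the greatest lower bound of φ and ψ with respect to instance reducibility: φ ⊓ ψ ≤ᵢ φ, φ ⊓ ψ ≤ᵢ ψ, and for every predicate θ : C → Prop with θ ≤ᵢ φ and θ ≤ᵢ ψ one has θ ≤ᵢ φ ⊓ ψ. -/
universe u v w

/-- Instance reducibility. -/
def InstRed {A : Type u} {B : Type v} (φ : A → Prop) (ψ : B → Prop) : Prop :=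
  ∀ x : A, ∃ y : B, ψ y → φ x

/-- The infimum of two predicates, defined on the product type. -/
def iInf2 {A : Type u} {B : Type v} (φ : A → Prop) (ψ : B → Prop) : A × B → Prop :=
  fun p => φ p.1 ∨ ψ p.2

theorem iInf2_isGLB {A : Type u} {B : Type v} (φ : A → Prop) (ψ : B → Prop) :
    InstRed (iInf2 φ ψ) φ ∧ InstRed (iInf2 φ ψ) ψ ∧
    ∀ {C : Type w} (θ : C → Prop), InstRed θ φ → InstRed θ ψ → InstRed θ (iInf2 φ ψ) := by
  refine ⟨fun p => ⟨p.1, Or.inl⟩, fun p => ⟨p.2, Or.inr⟩, fun θ h1 h2 x => ?_⟩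
  obtain ⟨a, ha⟩ := h1 x
  obtain ⟨b, hb⟩ := h2 x
  exact ⟨(a, b), fun h => h.elim ha hb⟩
end

section
/- Instance reducibility is distributive: for all predicates φ : A → Prop, ψ : B → Prop, and θ : C → Prop, the predicates (φ ⊔ ψ) ⊓ θ and (φ ⊓ θ) ⊔ (ψ ⊓ θ) are instance equivalent. -/
universe u v w

/-- Instance equivalence. -/
def InstEquiv {A : Type u} {B : Type v} (φ : A → Prop) (ψ : B → Prop) : Prop :=
  InstRed φ ψ ∧ InstRed ψ φ

/-- The supremum of two predicates, defined on the sum type. -/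
def iSup2 {A : Type u} {B : Type v} (φ : A → Prop) (ψ : B → Prop) : A ⊕ B → Prop :=
  Sum.elim φ ψ

theorem instRed_distrib {A : Type u} {B : Type v} {C : Type w}
    (φ : A → Prop) (ψ : B → Prop) (θ : C → Prop) :
    InstEquiv (iInf2 (iSup2 φ ψ) θ) (iSup2 (iInf2 φ θ) (iInf2 ψ θ)) := by
  constructor
  · rintro ⟨s | s, c⟩
    · exact ⟨Sum.inl (s, c), fun h => h.imp id id⟩
    · exact ⟨Sum.inr (s, c), fun h => h.imp id id⟩
  · rintro (⟨a, c⟩ | ⟨b, c⟩)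
    · exact ⟨(Sum.inl a, c), fun h => h.imp id id⟩
    · exact ⟨(Sum.inr b, c), fun h => h.imp id id⟩
end

section
/- Instance reducibility has Heyting implication: for predicates φ : A → Prop and ψ : B → Prop, define (φ ⇒ ψ) to be the predicate on the subtype {p : Prop // ∀ x : A, ∃ y : B, ψ y → (φ x ∨ p)} sending p to p.val. Then for every predicate θ : C → Prop, θ ⊓ φ ≤ᵢ ψ if and only if θ ≤ᵢ (φ ⇒ ψ). -/
universe u v w

/-- Heyting implication of instance degrees. -/
def iImp {A : Type u} {B : Type v} (φ : A → Prop) (ψ : B → Prop) :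
    {p : Prop // ∀ x : A, ∃ y : B, ψ y → (φ x ∨ p)} → Prop :=
  fun p => p.val

theorem instRed_heyting {A : Type u} {B : Type v} {C : Type w}
    (φ : A → Prop) (ψ : B → Prop) (θ : C → Prop) :
    InstRed (iInf2 θ φ) ψ ↔ InstRed θ (iImp φ ψ) := by
  constructor
  · intro h z
    refine ⟨⟨θ z, fun x => ?_⟩, id⟩
    obtain ⟨y, hy⟩ := h (z, x)
    exact ⟨y, fun hψ => (hy hψ).symm⟩
  · intro h p
    obtain ⟨⟨q, hq⟩, hpq⟩ := h p.1
    obtain ⟨y, hy⟩ := hq p.2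
    exact ⟨y, fun hψ => (hy hψ).imp (fun h => h) hpq |>.symm⟩
end

section
/- For every family of predicates φ i : A i → Prop indexed by a type I, the indexed infimum ⨅ᵢ φ is the greatest lower bound with respect to instance reducibility: ⨅ᵢ φ ≤ᵢ φ j for all j : I, and for every predicate ψ : B → Prop such that ψ ≤ᵢ φ i for all i : I, one has ψ ≤ᵢ ⨅ᵢ φ. -/
universe u v w

/-- The indexed infimum, defined on the product of families of inhabited subsets. -/
def piInf {I : Type u} {A : I → Type v} (φ : ∀ i, A i → Prop) :
    (∀ i : I, {s : Set (A i) // s.Nonempty}) → Prop :=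
  fun f => ∃ i, ∃ x ∈ (f i).val, φ i x

theorem piInf_isGLB {I : Type u} {A : I → Type v} (φ : ∀ i, A i → Prop) :
    (∀ j : I, InstRed (piInf φ) (φ j)) ∧
    ∀ {B : Type w} (ψ : B → Prop), (∀ i : I, InstRed ψ (φ i)) → InstRed ψ (piInf φ) := by
  constructor
  · intro j f
    obtain ⟨y, hy⟩ := (f j).2
    exact ⟨y, fun h => ⟨j, y, hy, h⟩⟩
  · intro B ψ h x
    choose y hy using fun i => h i x
    refine ⟨fun i => ⟨{y i}, ⟨y i, rfl⟩⟩, ?_⟩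
    rintro ⟨i, z, hz, hφ⟩
    exact hy i (by simpa using hz ▸ hφ)
end

section
/- The map p ↦ ⌜p⌝ is an anti-monotone embedding of propositions into instance degrees: (1) for all p, q : Prop, ⌜p⌝ ≤ᵢ ⌜q⌝ if and only if q → p; moreover (2) ⌜True⌝ ≡ᵢ (fun _ : Unit => True); (3) ⌜False⌝ is a top element, i.e., ψ ≤ᵢ ⌜False⌝ for every predicate ψ; (4) for all p, q : Prop, ⌜p ∨ q⌝ ≡ᵢ ⌜p⌝ ⊓ ⌜q⌝; (5) for every predicate φ : A → Prop, ⌜∃ x : A, φ x⌝ ≡ᵢ ⨅ᵢ (fun x : A => ⌜φ x⌝), the indexed infimum of the family x ↦ ⌜φ x⌝. -/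
universe u v w

/-- The predicate on `Unit` with constant value `p`. -/
def truthDeg (p : Prop) : Unit → Prop := fun _ => p

theorem truthDeg_antimonotone_embedding :
    (∀ p q : Prop, InstRed (truthDeg p) (truthDeg q) ↔ (q → p)) ∧
    InstEquiv (truthDeg True) (fun _ : Unit => True) ∧
    (∀ {B : Type v} (ψ : B → Prop), InstRed ψ (truthDeg False)) ∧
    (∀ p q : Prop, InstEquiv (truthDeg (p ∨ q)) (iInf2 (truthDeg p) (truthDeg q))) ∧
    (∀ {A : Type u} (φ : A → Prop),
      InstEquiv (truthDeg (∃ x : A, φ x)) (piInf (fun x : A => truthDeg (φ x)))) := by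
  refine ⟨?_, ?_, ?_, ?_, ?_⟩
  · intro p q
    constructor
    · intro h hq
      obtain ⟨y, hy⟩ := h ()
      exact hy hq
    · intro h x
      exact ⟨(), h⟩
  · exact ⟨fun x => ⟨(), fun _ => trivial⟩, fun x => ⟨(), fun _ => trivial⟩⟩
  · intro B ψ x
    exact ⟨(), fun h => h.elim⟩
  · intro p q
    constructor
    · intro x
      exact ⟨((), ()), fun h => h⟩
    · intro x
      exact ⟨(), fun h => h⟩
  · intro A φ
    constructor
    · intro x
      refine ⟨fun _ => ⟨Set.univ, ⟨(), trivial⟩⟩, ?_⟩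
      rintro ⟨i, _, _, hi⟩
      exact ⟨i, hi⟩
    · intro f
      refine ⟨(), ?_⟩
      rintro ⟨a, ha⟩
      obtain ⟨x, hx⟩ := (f a).2
      exact ⟨a, x, hx, ha⟩
end

section
/- The following are equivalent: (1) excluded middle, ∀ p : Prop, p ∨ ¬ p; (2) every predicate φ : A → Prop is instance equivalent to the empty predicate on the empty type, or to the constantly true predicate on Unit, or to the constantly false predicate on Unit; (3) instance reducibility is total: for all predicates φ : A → Prop and ψ : B → Prop, φ ≤ᵢ ψ or ψ ≤ᵢ φ; (4) every predicate φ : A → Prop satisfies φ ≤ᵢ (fun _ : Unit => True) or (fun _ : Unit => True) ≤ᵢ φ. -/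
universe u

theorem InstRed.trans' {A : Type u} {B : Type v} {C : Type w}
    {φ : A → Prop} {ψ : B → Prop} {χ : C → Prop}
    (h1 : InstRed φ ψ) (h2 : InstRed ψ χ) : InstRed φ χ := by
  intro x
  obtain ⟨y, hy⟩ := h1 x
  obtain ⟨z, hz⟩ := h2 y
  exact ⟨z, fun h => hy (hz h)⟩

theorem instRed_trivial_tfae :
    [ -- (1) excluded middle
      ∀ p : Prop, p ∨ ¬ p,
      -- (2) every degree is ⊥, the true degree, or ⊤
      ∀ (A : Type u) (φ : A → Prop),
        InstEquiv φ (fun _ : Empty => False) ∨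
        InstEquiv φ (fun _ : Unit => True) ∨
        InstEquiv φ (fun _ : Unit => False),
      -- (3) instance reducibility is total
      ∀ (A B : Type u) (φ : A → Prop) (ψ : B → Prop), InstRed φ ψ ∨ InstRed ψ φ,
      -- (4) every degree is below or above the true degree
      ∀ (A : Type u) (φ : A → Prop),
        InstRed φ (fun _ : Unit => True) ∨ InstRed (fun _ : Unit => True) φ
    ].TFAE := by
  tfae_have 1 → 2 := by
    intro em A φ
    rcases em (Nonempty A) with hA | hA
    · rcases em (∃ x, ¬ φ x) with ⟨x, hx⟩ | hno
      · right; right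
        exact ⟨fun x => ⟨(), False.elim⟩, fun _ => ⟨x, hx⟩⟩
      · right; left
        refine ⟨fun x => ⟨(), fun _ => ?_⟩, fun _ => ⟨hA.some, fun _ => trivial⟩⟩
        rcases em (φ x) with h | h
        · exact h
        · exact absurd ⟨x, h⟩ hno
    · left
      exact ⟨fun x => absurd ⟨x⟩ hA, fun x => x.elim⟩
  tfae_have 2 → 1 := by
    intro h2 p
    rcases h2 (ULift.{u} (PLift p)) (fun _ => False) with h | h | h
    · right
      intro hp
      obtain ⟨y, _⟩ := h.1 (ULift.up (PLift.up hp))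
      exact y.elim
    · left
      obtain ⟨y, _⟩ := h.2 ()
      exact y.down.down
    · left
      obtain ⟨y, _⟩ := h.2 ()
      exact y.down.down
  tfae_have 1 → 3 := by
    intro em A B φ ψ
    rcases em (InstRed φ ψ) with h | h
    · exact Or.inl h
    · right
      have hx : ∃ x : A, ¬ ∃ y : B, ψ y → φ x := by
        rcases em (∃ x : A, ¬ ∃ y : B, ψ y → φ x) with h' | h'
        · exact h'
        · exfalso
          apply h
          intro x
          rcases em (∃ y : B, ψ y → φ x) with h'' | h''
          · exact h''
          · exact absurd ⟨x, h''⟩ h'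
      obtain ⟨x, hx⟩ := hx
      intro y
      exact ⟨x, fun hφ => (hx ⟨y, fun _ => hφ⟩).elim⟩
  tfae_have 3 → 4 := by
    intro h3 A φ
    rcases h3 A PUnit φ (fun _ => True) with h | h
    · left
      exact h.trans' (fun _ => ⟨(), fun _ => trivial⟩)
    · right
      exact InstRed.trans' (fun _ => ⟨PUnit.unit, fun _ => trivial⟩) h
  tfae_have 4 → 1 := by
    intro h4 p
    rcases h4 (ULift.{u} (PLift p)) (fun _ => False) with h | h
    · right
      intro hp
      obtain ⟨_, hy⟩ := h (ULift.up (PLift.up hp))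
      exact hy trivial
    · left
      obtain ⟨y, _⟩ := h ()
      exact y.down.down
  tfae_finish
end

section
/- A predicate φ : A → Prop is ¬¬-dense, i.e., ∀ x : A, ¬¬ φ x, if and only if φ is instance reducible to the predicate LEM on Prop defined by LEM p ↔ (p ∨ ¬ p). -/
universe u v

theorem dense_iff_instRed_lem {A : Type u} (φ : A → Prop) :
    (∀ x : A, ¬¬ φ x) ↔ InstRed φ (fun p : Prop => p ∨ ¬ p) := by
  constructor
  · intro h x
    exact ⟨φ x, fun hp => hp.resolve_right (h x)⟩
  · intro h x hn
    obtain ⟨p, hp⟩ := h x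
    exact hn (hp (em p))
end

section
/- Let (A, ·) be a partial combinatory algebra with elementary sub-pca A′ ⊆ A. The map U ↦ extw U, where extw U r = {U[r]} if r ∈ supp U and extw U r = ∅ otherwise, and the map f ↦ U_f, where U_f = {(r, s) | ∃ θ ∈ f r, s ∈ θ}, constitute an equivalence between the preorder of ordinary Weihrauch predicates under ordinary Weihrauch reducibility and the preorder of ¬¬-dense modest extended Weihrauch predicates under extended Weihrauch reducibility: extw U is always ¬¬-dense and modest; U ≤_W V implies extw U ≤_eW extw V; f ≤_eW g implies U_f ≤_W U_g (for ¬¬-dense modest f, g); U_{extw U} = U for every ordinary Weihrauch predicate U; and extw (U_f) = f for every ¬¬-dense modest extended Weihrauch predicate f. -/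
namespace Stmt18

variable {A : Type}

/-- Extend a partial application `app : A → A → Part A` to partial elements. -/
def pap (app : A → A → Part A) (x y : Part A) : Part A :=
  x.bind fun a => y.bind fun b => app a b

/-- `K` and `S` are combinators for the partial application `app`. -/
def IsCombinators (app : A → A → Part A) (K S : A) : Prop :=
  (∀ a : A, (app K a).Dom) ∧
  (∀ a b : A, pap app (app K a) (Part.some b) = Part.some a) ∧
  (∀ a b : A, (pap app (app S a) (Part.some b)).Dom) ∧
  (∀ a b c : A,
    pap app (pap app (app S a) (Part.some b)) (Part.some c) =
      pap app (app a c) (app b c))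

/-- `(A, app)` is a partial combinatory algebra. -/
def IsPCA (app : A → A → Part A) : Prop :=
  ∃ K S : A, IsCombinators app K S

/-- `A'` is an elementary sub-pca: closed under application and containing
suitable `K` and `S`. -/
def IsSubPCA (app : A → A → Part A) (A' : Set A) : Prop :=
  (∀ a ∈ A', ∀ b ∈ A', ∀ c ∈ app a b, c ∈ A') ∧
  (∃ K ∈ A', ∃ S ∈ A', IsCombinators app K S)

/-- Support of an ordinary Weihrauch predicate `U ⊆ A × A`. -/
def wSupp (U : Set (A × A)) : Set A := {r | ∃ s, (r, s) ∈ U}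

/-- Ordinary Weihrauch reducibility relative to `A'`. -/
def WRed (app : A → A → Part A) (A' : Set A) (U V : Set (A × A)) : Prop :=
  ∃ l₁ ∈ A', ∃ l₂ ∈ A', ∀ r ∈ wSupp U,
    (∃ t ∈ app l₁ r, t ∈ wSupp V ∧
      ∀ s, (t, s) ∈ V → ∃ v ∈ pap app (app l₂ r) (Part.some s), (r, v) ∈ U)

/-- Support of an extended Weihrauch predicate. -/
def eSupp (f : A → Set (Set A)) : Set A := {r | f r ≠ ∅}

/-- Extended Weihrauch reducibility relative to `A'`. -/
def EWRed (app : A → A → Part A) (A' : Set A) (f g : A → Set (Set A)) : Prop :=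
  ∃ l₁ ∈ A', ∃ l₂ ∈ A', ∀ r ∈ eSupp f,
    (∃ t ∈ app l₁ r, t ∈ eSupp g ∧
      ∀ θ ∈ f r, ∃ ξ ∈ g t, ∀ s ∈ ξ,
        ∃ v ∈ pap app (app l₂ r) (Part.some s), v ∈ θ)

/-- An extended Weihrauch predicate is modest when each `f r` has at most one element. -/
def Modest (f : A → Set (Set A)) : Prop := ∀ r : A, (f r).Subsingleton

/-- An extended Weihrauch predicate is `¬¬`-dense when all its values consist of
nonempty sets of realizers. -/
def Dense (f : A → Set (Set A)) : Prop := ∀ r : A, ∀ θ ∈ f r, θ ≠ ∅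

/-- Embedding of ordinary into extended Weihrauch predicates. -/
def extw (U : Set (A × A)) : A → Set (Set A) :=
  fun r => {θ | r ∈ wSupp U ∧ θ = {s | (r, s) ∈ U}}

/-- The ordinary Weihrauch predicate associated with an extended one. -/
def ordw (f : A → Set (Set A)) : Set (A × A) :=
  {p | ∃ θ ∈ f p.1, p.2 ∈ θ}

theorem ordinary_equiv_dense_modest_extended
    (app : A → A → Part A) (A' : Set A) (hsub : IsSubPCA app A') :
    (∀ U : Set (A × A), Dense (extw U) ∧ Modest (extw U)) ∧
    (∀ U V : Set (A × A), WRed app A' U V → EWRed app A' (extw U) (extw V)) ∧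
    (∀ f g : A → Set (Set A), Dense f → Modest f → Dense g → Modest g →
      EWRed app A' f g → WRed app A' (ordw f) (ordw g)) ∧
    (∀ U : Set (A × A), ordw (extw U) = U) ∧
    (∀ f : A → Set (Set A), Dense f → Modest f → extw (ordw f) = f) := by

  refine ⟨?_, ?_, ?_, ?_, ?_⟩
  · intro U
    constructor
    · rintro r θ ⟨⟨s, hs⟩, rfl⟩
      exact Set.nonempty_iff_ne_empty.mp ⟨s, hs⟩
    · intro r θ hθ θ' hθ'
      rw [hθ.2, hθ'.2]
  · rintro U V ⟨l₁, hl₁, l₂, hl₂, h⟩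
    refine ⟨l₁, hl₁, l₂, hl₂, ?_⟩
    intro r hr
    have hr' : r ∈ wSupp U := by
      obtain ⟨θ, hθ⟩ := Set.nonempty_iff_ne_empty.mpr hr
      exact hθ.1
    obtain ⟨t, ht, htV, hV⟩ := h r hr'
    refine ⟨t, ht, ?_, ?_⟩
    · intro hemp
      have : {s | (t, s) ∈ V} ∈ extw V t := ⟨htV, rfl⟩
      rw [hemp] at this; exact this
    · rintro θ ⟨-, rfl⟩
      exact ⟨{s | (t, s) ∈ V}, ⟨htV, rfl⟩, fun s hs => hV s hs⟩
  · rintro f g hdf hmf hdg hmg ⟨l₁, hl₁, l₂, hl₂, h⟩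
    refine ⟨l₁, hl₁, l₂, hl₂, ?_⟩
    rintro r ⟨s₀, θ₀, hθ₀, hs₀⟩
    have hr : r ∈ eSupp f := fun he => by rw [he] at hθ₀; exact hθ₀
    obtain ⟨t, ht, htg, hg⟩ := h r hr
    obtain ⟨ξ', hξ', hξ'v⟩ := hg θ₀ hθ₀
    obtain ⟨s₁, hs₁⟩ := Set.nonempty_iff_ne_empty.mpr (hdg t ξ' hξ')
    refine ⟨t, ht, ⟨s₁, ξ', hξ', hs₁⟩, ?_⟩
    rintro s ⟨ξ, hξ, hsξ⟩
    obtain ⟨v, hv, hvθ⟩ := hξ'v s (hmg t hξ hξ' ▸ hsξ)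
    exact ⟨v, hv, θ₀, hθ₀, hvθ⟩
  · intro U
    ext ⟨r, s⟩
    constructor
    · rintro ⟨θ, ⟨hr, rfl⟩, hs⟩; exact hs
    · intro h; exact ⟨_, ⟨⟨s, h⟩, rfl⟩, h⟩
  · intro f hdf hmf
    funext r
    ext θ
    constructor
    · rintro ⟨⟨s₀, θ₀, hθ₀, hs₀⟩, rfl⟩
      have heq : ({s | (r, s) ∈ ordw f} : Set A) = θ₀ := by
        ext s; constructor
        · rintro ⟨θ', hθ', hs⟩; rwa [hmf r hθ' hθ₀] at hs
        · intro hs; exact ⟨θ₀, hθ₀, hs⟩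
      rw [heq]; exact hθ₀
    · intro hθ
      obtain ⟨s, hs⟩ := Set.nonempty_iff_ne_empty.mpr (hdf r θ hθ)
      refine ⟨⟨s, θ, hθ, hs⟩, ?_⟩
      ext s'; constructor
      · intro hs'; exact ⟨θ, hθ, hs'⟩
      · rintro ⟨θ', hθ', hs'⟩; rwa [hmf r hθ' hθ] at hs'

end Stmt18
end

section
/- Let (A, ·) be a partial combinatory algebra with elementary sub-pca A′ ⊆ A. Extended Weihrauch reducibility and instance reducibility of realizability predicates on assemblies are equivalent preorders. Concretely: (1) the map sending a realizability predicate φ : |S| → Set A on an assembly S to the extended Weihrauch predicate f_{(φ,S)} with f_{(φ,S)}(r) = {θ ∈ Set A | ∃ x ∈ |S|, r ⊩_S x ∧ θ = φ x} is monotone: (φ, S) ⪯ (ψ, T) implies f_{(φ,S)} ≤_eW f_{(ψ,T)}; (2) the map sending an extended Weihrauch predicate f to the realizability predicate φ_f on the assembly S_f, where |S_f| = {(r, θ) ∈ A × Set A | θ ∈ f r}, s ⊩_{S_f} (r, θ) iff s = r, and φ_f(r, θ) = θ, is monotone: f ≤_eW g implies (φ_f, S_f) ⪯ (φ_g, S_g);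 (3) f_{(φ_f, S_f)} = f for every extended Weihrauch predicate f; and (4) (φ_{f_{(φ,S)}}, S_{f_{(φ,S)}}) and (φ, S) are instance reducible to each other for every realizability predicate (φ, S). -/
namespace Stmt19

variable {A : Type}

/-- Extend a partial application `app : A → A → Part A` to partial elements. -/
def pap (app : A → A → Part A) (x y : Part A) : Part A :=
  x.bind fun a => y.bind fun b => app a b

/-- `K` and `S` are combinators for the partial application `app`. -/
def IsCombinators (app : A → A → Part A) (K S : A) : Prop :=
  (∀ a : A, (app K a).Dom) ∧
  (∀ a b : A, pap app (app K a) (Part.some b) = Part.some a) ∧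
  (∀ a b : A, (pap app (app S a) (Part.some b)).Dom) ∧
  (∀ a b c : A,
    pap app (pap app (app S a) (Part.some b)) (Part.some c) =
      pap app (app a c) (app b c))

/-- `A'` is an elementary sub-pca: closed under application and containing
suitable `K` and `S`. -/
def IsSubPCA (app : A → A → Part A) (A' : Set A) : Prop :=
  (∀ a ∈ A', ∀ b ∈ A', ∀ c ∈ app a b, c ∈ A') ∧
  (∃ K ∈ A', ∃ S ∈ A', IsCombinators app K S)

/-- An assembly over `A`: a carrier together with a total realizability relation. -/
structure Assembly (A : Type) where
  carrier : Type
  rz : A → carrier → Prop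
  total : ∀ x : carrier, ∃ r : A, rz r x

/-- Instance reducibility of realizability predicates on assemblies. -/
def InstRedRz (app : A → A → Part A) (A' : Set A) (S T : Assembly A)
    (φ : S.carrier → Set A) (ψ : T.carrier → Set A) : Prop :=
  ∃ l₁ ∈ A', ∃ l₂ ∈ A', ∀ (s : A) (x : S.carrier), S.rz s x →
    ∃ y : T.carrier, (∃ t ∈ app l₁ s, T.rz t y) ∧
      ∀ p ∈ ψ y, ∃ v ∈ pap app (app l₂ s) (Part.some p), v ∈ φ x

/-- Support of an extended Weihrauch predicate. -/
def eSupp (f : A → Set (Set A)) : Set A := {r | f r ≠ ∅}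

/-- Extended Weihrauch reducibility relative to `A'`. -/
def EWRed (app : A → A → Part A) (A' : Set A) (f g : A → Set (Set A)) : Prop :=
  ∃ l₁ ∈ A', ∃ l₂ ∈ A', ∀ r ∈ eSupp f,
    (∃ t ∈ app l₁ r, t ∈ eSupp g ∧
      ∀ θ ∈ f r, ∃ ξ ∈ g t, ∀ s ∈ ξ,
        ∃ v ∈ pap app (app l₂ r) (Part.some s), v ∈ θ)

/-- The extended Weihrauch predicate associated with a realizability predicate
on an assembly. -/
def toEW (S : Assembly A) (φ : S.carrier → Set A) : A → Set (Set A) :=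
  fun r => {θ | ∃ x : S.carrier, S.rz r x ∧ θ = φ x}

/-- The assembly associated with an extended Weihrauch predicate. -/
def toAsm (f : A → Set (Set A)) : Assembly A where
  carrier := {p : A × Set A // p.2 ∈ f p.1}
  rz s p := s = p.val.1
  total p := ⟨p.val.1, rfl⟩

/-- The realizability predicate associated with an extended Weihrauch predicate. -/
def toPred (f : A → Set (Set A)) : (toAsm f).carrier → Set A :=
  fun p => p.val.2

theorem extended_weihrauch_equiv_instance
    (app : A → A → Part A) (A' : Set A) (hsub : IsSubPCA app A') :
    (∀ (S T : Assembly A) (φ : S.carrier → Set A) (ψ : T.carrier → Set A),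
      InstRedRz app A' S T φ ψ → EWRed app A' (toEW S φ) (toEW T ψ)) ∧
    (∀ f g : A → Set (Set A),
      EWRed app A' f g →
        InstRedRz app A' (toAsm f) (toAsm g) (toPred f) (toPred g)) ∧
    (∀ f : A → Set (Set A), toEW (toAsm f) (toPred f) = f) ∧
    (∀ (S : Assembly A) (φ : S.carrier → Set A),
      InstRedRz app A' (toAsm (toEW S φ)) S (toPred (toEW S φ)) φ ∧
      InstRedRz app A' S (toAsm (toEW S φ)) φ (toPred (toEW S φ))) := by
  obtain ⟨hcl, K, hK, S, hS, hKd, hKv, hSd, hSv⟩ := hsub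
  -- Build the identity combinator i = S·K·K
  have hPd := hSd K K
  obtain ⟨sk, hsk, hi⟩ : ∃ a ∈ app S K,
      (pap app (app S K) (Part.some K)).get hPd ∈ app a K := by
    have h := Part.get_mem hPd
    simpa [pap] using h
  set i := (pap app (app S K) (Part.some K)).get hPd with hidef
  have hiA : i ∈ A' := hcl sk (hcl S hS K hK sk hsk) K hK i hi
  have hPs : pap app (app S K) (Part.some K) = Part.some i :=
    Part.eq_some_iff.mpr (Part.get_mem hPd)
  have hix : ∀ x, app i x = Part.some x := by
    intro x
    obtain ⟨kx, hKx⟩ : ∃ kx, app K x = Part.some kx :=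
      ⟨_, Part.eq_some_iff.mpr (Part.get_mem (hKd x))⟩
    have h4 := hSv K K x
    have h5 := hKv x kx
    rw [hPs, hKx] at h4
    rw [hKx] at h5
    rw [h5] at h4
    simpa [pap] using h4
  -- Build ki = K·i, so that ki·s = i for all s
  have hkid := hKd i
  set ki := (app K i).get hkid with hkidef
  have hkiA : ki ∈ A' := hcl K hK i hiA ki (Part.get_mem _)
  have hkis : ∀ s, app ki s = Part.some i := by
    intro s
    have h : i ∈ pap app (app K i) (Part.some s) := by
      rw [hKv]; exact Part.mem_some i
    obtain ⟨a, ha, hia⟩ : ∃ a ∈ app K i, i ∈ app a s := by simpa [pap] using h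
    have hak : a = ki := Part.mem_unique ha (Part.get_mem hkid)
    subst hak
    exact Part.eq_some_iff.mpr hia
  have hkip : ∀ s p : A, pap app (app ki s) (Part.some p) = Part.some p := by
    intro s p
    rw [hkis]
    simp [pap, hix]
  refine ⟨?_, ?_, ?_, ?_⟩
  · -- Part 1
    rintro S' T φ ψ ⟨l₁, hl₁, l₂, hl₂, h⟩
    refine ⟨l₁, hl₁, l₂, hl₂, ?_⟩
    intro r hr
    obtain ⟨θ₀, x₀, hx₀, -⟩ := Set.nonempty_iff_ne_empty.mpr hr
    obtain ⟨y₀, ⟨t, ht, hty⟩, -⟩ := h r x₀ hx₀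
    refine ⟨t, ht, Set.nonempty_iff_ne_empty.mp ⟨ψ y₀, y₀, hty, rfl⟩, ?_⟩
    rintro θ ⟨x, hx, rfl⟩
    obtain ⟨y, ⟨t', ht', hty'⟩, h2⟩ := h r x hx
    have htt : t' = t := Part.mem_unique ht' ht
    subst htt
    exact ⟨ψ y, ⟨y, hty', rfl⟩, h2⟩
  · -- Part 2
    rintro f g ⟨l₁, hl₁, l₂, hl₂, h⟩
    refine ⟨l₁, hl₁, l₂, hl₂, ?_⟩
    rintro s ⟨⟨r, θ⟩, hθ⟩ hs
    have hsr : s = r := hs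
    subst hsr
    have hr : s ∈ eSupp f := Set.nonempty_iff_ne_empty.mp ⟨θ, hθ⟩
    obtain ⟨t, ht, htg, h2⟩ := h s hr
    obtain ⟨ξ, hξ, h3⟩ := h2 θ hθ
    exact ⟨⟨(t, ξ), hξ⟩, ⟨t, ht, rfl⟩, h3⟩
  · -- Part 3
    intro f
    funext r
    ext θ
    constructor
    · rintro ⟨⟨⟨r', θ'⟩, hθ'⟩, hrz, rfl⟩
      have : r = r' := hrz
      subst this
      exact hθ'
    · intro hθ
      exact ⟨⟨(r, θ), hθ⟩, rfl, rfl⟩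
  · -- Part 4
    intro S' φ
    constructor
    · refine ⟨i, hiA, ki, hkiA, ?_⟩
      rintro s ⟨⟨r, θ⟩, x, hx, hθ⟩ hs
      have hsr : s = r := hs
      subst hsr
      refine ⟨x, ⟨s, by rw [hix]; exact Part.mem_some s, hx⟩, ?_⟩
      intro p hp
      refine ⟨p, by rw [hkip]; exact Part.mem_some p, ?_⟩
      show p ∈ θ
      have hθ' : θ = φ x := hθ
      rw [hθ']; exact hp
    · refine ⟨i, hiA, ki, hkiA, ?_⟩
      intro s x hx
      refine ⟨⟨(s, φ x), ⟨x, hx, rfl⟩⟩, ⟨s, by rw [hix]; exact Part.mem_some s, rfl⟩, ?_⟩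
      intro p hp
      exact ⟨p, by rw [hkip]; exact Part.mem_some p, hp⟩

end Stmt19
end
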